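/- With σ as above (σ' = 1 + e^{−1/(s−s₀)²}, σ'' = −2e^{−1/(s−s₀)²}/(s−s₀)³ for s < s₀), for u smooth positive with u' ≥ 0 bounded on compact sets, the quantity (n−1) − (n−1)σ'(s)² − 2u(σ(s))u'(σ(s))σ''(s) equals e^{−1/(s−s₀)²}( −2(n−1) − (n−1)e^{−1/(s−s₀)²} − 4u(σ)u'(σ)/(s−s₀)³ ), and this is positive for all s ∈ [s₀−δ, s₀) when δ > 0 is sufficiently small. -/

import Mathlib

/- The key positivity in the Schwarzschild bending: with σ' = θ = 1 + e^{-1/(s-s₀)²}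
(for s < s₀) and σ'' = θ', the quantity
(n-1) - (n-1)(σ')² - 2 u(σ)u'(σ) σ''
factors as e^{-1/(s-s₀)²}( -2(n-1) - (n-1)e^{-1/(s-s₀)²} - 4u(σ)u'(σ)/(s-s₀)³ ),
and is positive on [s₀-δ, s₀) for δ > 0 sufficiently small, since u(σ)u'(σ) is continuous
and positive at s₀ and the term -4uu'/(s-s₀)³ = 4uu'/|s-s₀|³ dominates. -/
theorem stmt_12 (n : ℕ) (hn : 2 ≤ n) (s₀ : ℝ) (u u' σ : ℝ → ℝ)
    (hv : Continuous fun s => u (σ s) * u' (σ s))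
    (hv0 : 0 < u (σ s₀) * u' (σ s₀)) :
    ∀ θ E : ℝ → ℝ,
      (∀ s, θ s = 1 + Real.exp (-1 / (s - s₀) ^ 2)) →
      (∀ s, E s = ((n : ℝ) - 1) - ((n : ℝ) - 1) * (θ s) ^ 2
          - 2 * (u (σ s) * u' (σ s)) * deriv θ s) →
      (∀ s, s < s₀ →
        E s = Real.exp (-1 / (s - s₀) ^ 2) *
          (-2 * ((n : ℝ) - 1) - ((n : ℝ) - 1) * Real.exp (-1 / (s - s₀) ^ 2)
            - 4 * (u (σ s) * u' (σ s)) / (s - s₀) ^ 3)) ∧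
      ∃ δ > 0, ∀ s ∈ Set.Ico (s₀ - δ) s₀, 0 < E s := by
  intro θ E hθ hE
  have hθfun : θ = fun s => 1 + Real.exp (-1 / (s - s₀) ^ 2) := funext hθ
  have hderiv : ∀ s : ℝ, s ≠ s₀ →
      deriv θ s = Real.exp (-1 / (s - s₀) ^ 2) * (2 / (s - s₀) ^ 3) := by
    intro s hs
    have hsub : (s - s₀) ≠ 0 := sub_ne_zero.mpr hs
    have hne : ((s - s₀) ^ 2 : ℝ) ≠ 0 := pow_ne_zero _ hsub
    have h1 : HasDerivAt (fun x : ℝ => (x - s₀) ^ 2) (2 * (s - s₀)) s := by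
      simpa using ((hasDerivAt_id s).sub_const s₀).fun_pow 2
    have h2 : HasDerivAt (fun x : ℝ => -1 / (x - s₀) ^ 2) (2 / (s - s₀) ^ 3) s := by
      have h := (h1.fun_inv hne).fun_neg
      have : (fun x : ℝ => -((x - s₀) ^ 2)⁻¹) = fun x : ℝ => -1 / (x - s₀) ^ 2 := by
        funext x; field_simp
      rw [this] at h
      refine h.congr_deriv ?_
      rw [neg_div, neg_neg, div_eq_div_iff (pow_ne_zero _ hne) (pow_ne_zero _ hsub)]
      ring
    have h3 := h2.exp
    have h4 := h3.const_add 1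
    rw [hθfun]
    exact h4.deriv
  have key : ∀ s, s < s₀ →
      E s = Real.exp (-1 / (s - s₀) ^ 2) *
        (-2 * ((n : ℝ) - 1) - ((n : ℝ) - 1) * Real.exp (-1 / (s - s₀) ^ 2)
          - 4 * (u (σ s) * u' (σ s)) / (s - s₀) ^ 3) := by
    intro s hs
    have hsub : (s - s₀) ≠ 0 := sub_ne_zero.mpr hs.ne
    rw [hE, hderiv s hs.ne, hθ]
    field_simp
    ring
  refine ⟨key, ?_⟩
  set V : ℝ → ℝ := fun s => u (σ s) * u' (σ s) with hVdef
  set V₀ : ℝ := V s₀ with hV₀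
  have hcont : ContinuousAt V s₀ := hv.continuousAt
  obtain ⟨δ₁, hδ₁, hVb⟩ := Metric.continuousAt_iff.mp hcont (V₀ / 2) (by positivity)
  have hn1 : (1 : ℝ) ≤ (n : ℝ) - 1 := by
    have : (2 : ℝ) ≤ (n : ℝ) := by exact_mod_cast hn
    linarith
  have hnpos : (0 : ℝ) < 3 * (n : ℝ) := by linarith
  refine ⟨min (δ₁ / 2) (min 1 (V₀ / (3 * n))), by positivity, ?_⟩
  intro s hsmem
  obtain ⟨hs1, hs2⟩ := hsmem
  set t : ℝ := s₀ - s with ht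
  have htpos : 0 < t := by simp [ht]; linarith
  have htle : t ≤ min (δ₁ / 2) (min 1 (V₀ / (3 * n))) := by
    simp only [ht]; linarith
  have htδ1 : t < δ₁ :=
    lt_of_le_of_lt (htle.trans (min_le_left _ _)) (by linarith)
  have ht1 : t ≤ 1 := htle.trans ((min_le_right _ _).trans (min_le_left _ _))
  have htV : t ≤ V₀ / (3 * n) := htle.trans ((min_le_right _ _).trans (min_le_right _ _))
  -- V s > V₀ / 2
  have hVs : V₀ / 2 < V s := by
    have hd : dist s s₀ < δ₁ := by
      rw [Real.dist_eq, abs_sub_comm, abs_of_pos (by linarith : (0:ℝ) < s₀ - s)]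
      exact htδ1
    have := hVb hd
    rw [Real.dist_eq] at this
    have := abs_lt.mp this
    rw [← hV₀] at this
    linarith [this.1]
  -- cube bound
  have ht3 : t ^ 3 ≤ V₀ / (3 * n) := by
    calc t ^ 3 ≤ t ^ 1 := pow_le_pow_of_le_one htpos.le ht1 (by norm_num)
    _ = t := pow_one t
    _ ≤ _ := htV
  have ht3pos : (0:ℝ) < t ^ 3 := by positivity
  -- exponential bounds
  have hepos : 0 < Real.exp (-1 / (s - s₀) ^ 2) := Real.exp_pos _
  have helt : Real.exp (-1 / (s - s₀) ^ 2) < 1 := by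
    apply Real.exp_lt_one_iff.mpr
    have hneg : s - s₀ < 0 := by linarith
    have : (0:ℝ) < (s - s₀) ^ 2 := by nlinarith
    exact div_neg_of_neg_of_pos (by norm_num) this
  rw [key s hs2]
  apply mul_pos hepos
  have hcube : (s - s₀) ^ 3 = -(t ^ 3) := by rw [ht]; ring
  rw [hcube]
  have h4V : 4 * (u (σ s) * u' (σ s)) / (-(t ^ 3)) = -(4 * V s / t ^ 3) := by
    rw [div_neg]
  rw [h4V]
  have hbig : 6 * (n : ℝ) ≤ 2 * V₀ / t ^ 3 := by
    rw [le_div_iff₀ ht3pos]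
    have h5 := (le_div_iff₀ hnpos).mp htV
    have h6 : t ^ 3 ≤ t := by
      calc t ^ 3 ≤ t ^ 1 := pow_le_pow_of_le_one htpos.le ht1 (by norm_num)
      _ = t := pow_one t
    nlinarith
  have h2 : 2 * V₀ / t ^ 3 < 4 * V s / t ^ 3 :=
    (div_lt_div_iff_of_pos_right ht3pos).mpr (by linarith)
  have hne : ((n:ℝ) - 1) * Real.exp (-1 / (s - s₀) ^ 2) < (n:ℝ) - 1 := by
    nlinarith
  linarith
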